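/- If P = I - εL is the Perron matrix of a balanced digraph G with Laplacian L whose maximum degree is Δ = max_i Σ_{j≠i} a_{ij}, and ε ∈ (0, 1/Δ], then P is a doubly stochastic matrix (nonnegative, row sums and column sums equal to 1). -/
import Mathlib


open Finset Matrix

/-- Lemma 3(3) of Olfati-Saber: the Perron matrix `P = I - ε L` of a balanced
digraph with `ε ∈ (0, 1/Δ]` is doubly stochastic. -/
theorem stmt_0 {n : ℕ} (hn : 0 < n)
    (A : Matrix (Fin n) (Fin n) ℝ)
    (hA : ∀ i j, 0 ≤ A i j) (hAdiag : ∀ i, A i i = 0)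
    (hbal : ∀ i, ∑ j, A i j = ∑ j, A j i)
    (d : Fin n → ℝ) (hd : ∀ i, d i = ∑ j ∈ Finset.univ.filter (fun j => j ≠ i), A i j)
    (L : Matrix (Fin n) (Fin n) ℝ) (hL : L = Matrix.diagonal d - A)
    (Δ : ℝ)
    (hΔ : Δ = Finset.univ.sup' (Finset.univ_nonempty_iff.mpr ⟨⟨0, hn⟩⟩) d)
    (hΔpos : 0 < Δ)
    (ε : ℝ) (hε0 : 0 < ε) (hε1 : ε ≤ 1 / Δ)
    (P : Matrix (Fin n) (Fin n) ℝ) (hP : P = 1 - ε • L) :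
    (∀ i j, 0 ≤ P i j) ∧ (∀ i, ∑ j, P i j = 1) ∧ (∀ j, ∑ i, P i j = 1) := by
  -- d i = full row sum
  have hd' : ∀ i, d i = ∑ j, A i j := by
    intro i
    rw [hd i, ← Finset.sum_filter_add_sum_filter_not Finset.univ (fun j => j ≠ i) (A i)]
    have : ∑ j ∈ Finset.univ.filter (fun j => ¬ j ≠ i), A i j = 0 := by
      rw [Finset.sum_eq_zero]
      intro j hj
      simp only [Finset.mem_filter, not_not] at hj
      rw [hj.2, hAdiag]
    rw [this, add_zero]
  have hdΔ : ∀ i, d i ≤ Δ := by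
    intro i
    rw [hΔ]
    exact Finset.le_sup' d (Finset.mem_univ i)
  have hεΔ : ε * Δ ≤ 1 := by
    calc ε * Δ ≤ (1 / Δ) * Δ := by nlinarith
    _ = 1 := by field_simp
  have hPij : ∀ i j, P i j = (if i = j then 1 else 0) - ε * ((if i = j then d i else 0) - A i j) := by
    intro i j
    rw [hP, hL]
    simp [Matrix.sub_apply, Matrix.smul_apply, Matrix.one_apply, Matrix.diagonal_apply]
  refine ⟨?_, ?_, ?_⟩
  · intro i j
    rw [hPij]
    by_cases h : i = j
    · subst h
      simp only [if_pos rfl, hAdiag, if_true, eq_self_iff_true, sub_zero]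
      nlinarith [hdΔ i]
    · simp only [if_neg h]
      nlinarith [hA i j]
  · intro i
    have : ∑ j, P i j = ∑ j, ((if i = j then (1:ℝ) else 0) - ε * ((if i = j then d i else 0) - A i j)) := by
      exact Finset.sum_congr rfl fun j _ => hPij i j
    rw [this]
    rw [Finset.sum_sub_distrib, ← Finset.mul_sum, Finset.sum_sub_distrib]
    simp [Finset.sum_ite_eq, hd' i]
  · intro j
    have : ∑ i, P i j = ∑ i, ((if i = j then (1:ℝ) else 0) - ε * ((if i = j then d i else 0) - A i j)) := by
      exact Finset.sum_congr rfl fun i _ => hPij i j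
    rw [this]
    rw [Finset.sum_sub_distrib, ← Finset.mul_sum, Finset.sum_sub_distrib]
    simp [Finset.sum_ite_eq', hd' j, hbal j]
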